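/- Suppose Φ satisfies the squared-form RIC with parameters (s, δ), δ < 1, and T is a set with |T| ≤ s. For the least-squares solution b|_T = Φ_T† u with u = Φx + e and supp(x) ⊆ T, one has ‖b|_T − x|_T‖₂ ≤ ‖e‖₂ / (1−δ). -/
import Mathlib


open Finset

/-- The ℓ₂ norm on ℝ^N. -/
noncomputable def l2 {N : ℕ} (v : Fin N → ℝ) : ℝ := Real.sqrt (∑ i, v i ^ 2)

/-- The ℓ₁ norm on ℝ^N. -/
def l1 {N : ℕ} (v : Fin N → ℝ) : ℝ := ∑ i, |v i|

/-- A vector is `s`-sparse if it has at most `s` nonzero coordinates. -/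
def Sparse {N : ℕ} (s : ℕ) (v : Fin N → ℝ) : Prop :=
  (Finset.univ.filter fun j => v j ≠ 0).card ≤ s

/-- Restricted isometry condition with parameters (n, δ). -/
def RIC {m N : ℕ} (Φ : Matrix (Fin m) (Fin N) ℝ) (n : ℕ) (δ : ℝ) : Prop :=
  ∀ v : Fin N → ℝ, Sparse n v →
    (1 - δ) * l2 v ≤ l2 (Φ.mulVec v) ∧ l2 (Φ.mulVec v) ≤ (1 + δ) * l2 v

/-- Squared-form restricted isometry condition with parameters (n, δ). -/
def RICsq {m N : ℕ} (Φ : Matrix (Fin m) (Fin N) ℝ) (n : ℕ) (δ : ℝ) : Prop :=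
  ∀ v : Fin N → ℝ, Sparse n v →
    (1 - δ) * (l2 v) ^ 2 ≤ (l2 (Φ.mulVec v)) ^ 2 ∧
    (l2 (Φ.mulVec v)) ^ 2 ≤ (1 + δ) * (l2 v) ^ 2

/-- `xs` is the vector keeping the `s` largest-magnitude coordinates of `x`
(other coordinates set to 0). -/
def IsLargest {N : ℕ} (s : ℕ) (x xs : Fin N → ℝ) : Prop :=
  ∃ T : Finset (Fin N), T.card = min s N ∧
    (∀ i, xs i = if i ∈ T then x i else 0) ∧
    ∀ i ∈ T, ∀ j ∉ T, |x j| ≤ |x i|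

/-- The least-squares estimation step: `b` is supported on `T` and satisfies the
normal equations `Φ_T^* (u - Φ b) = 0`, i.e. `b|_T = Φ_T† u`. -/
theorem least_squares_estimate {m N s : ℕ} (Φ : Matrix (Fin m) (Fin N) ℝ) (δ : ℝ)
    (hδ : δ < 1) (h : RICsq Φ s δ) (T : Finset (Fin N)) (hT : T.card ≤ s)
    (x b : Fin N → ℝ) (e u : Fin m → ℝ)
    (hx : ∀ i, x i ≠ 0 → i ∈ T) (hu : u = Φ.mulVec x + e)
    (hbsupp : ∀ i, i ∉ T → b i = 0)
    (hnormal : ∀ j ∈ T, Φ.transpose.mulVec (u - Φ.mulVec b) j = 0) :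
    l2 (b - x) ≤ l2 e / (1 - δ) := by
  have h1δ : 0 < 1 - δ := by linarith
  have he0 : 0 ≤ l2 e := Real.sqrt_nonneg _
  set v : Fin N → ℝ := b - x with hv
  have hvsupp : ∀ j, j ∉ T → v j = 0 := by
    intro j hj
    have hxj : x j = 0 := by by_contra h'; exact hj (hx j h')
    simp [hv, hbsupp j hj, hxj]
  have hsv : Sparse s v := by
    refine le_trans (Finset.card_le_card ?_) hT
    intro j hj
    simp only [Finset.mem_filter] at hj
    by_contra h'
    exact hj.2 (hvsupp j h')
  rcases T.eq_empty_or_nonempty with hTe | ⟨j0, hj0⟩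
  · have hv0 : v = 0 := funext fun j => hvsupp j (by simp [hTe])
    have : l2 v = 0 := by simp [hv0, l2]
    rw [this]
    positivity
  · -- δ ≥ 0
    have hδ0 : 0 ≤ δ := by
      set f : Fin N → ℝ := fun i => if i = j0 then 1 else 0 with hf
      have hsf : Sparse s f := by
        have hsub : (Finset.univ.filter fun j => f j ≠ 0) ⊆ {j0} := by
          intro j hj
          simp only [Finset.mem_filter, hf] at hj
          simp only [Finset.mem_singleton]
          by_contra h'
          exact hj.2 (by simp [h'])
        calc (Finset.univ.filter fun j => f j ≠ 0).card ≤ ({j0} : Finset (Fin N)).card :=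
              Finset.card_le_card hsub
          _ = 1 := Finset.card_singleton _
          _ ≤ s := le_trans (Finset.card_le_card (Finset.singleton_subset_iff.mpr hj0)) hT
      have hlf : l2 f = 1 := by
        simp [l2, hf, Finset.sum_ite_eq']
      have := h f hsf
      rw [hlf] at this
      nlinarith [this.1, this.2]
    -- main argument
    set A : Fin m → ℝ := Φ.mulVec v with hA
    have hA0 : 0 ≤ l2 A := Real.sqrt_nonneg _
    have hA2 : (l2 A) ^ 2 = ∑ i, A i ^ 2 :=
      Real.sq_sqrt (Finset.sum_nonneg fun i _ => sq_nonneg _)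
    have hv2 : (l2 v) ^ 2 = ∑ i, v i ^ 2 :=
      Real.sq_sqrt (Finset.sum_nonneg fun i _ => sq_nonneg _)
    have he2 : (l2 e) ^ 2 = ∑ i, e i ^ 2 :=
      Real.sq_sqrt (Finset.sum_nonneg fun i _ => sq_nonneg _)
    have hAe : ∀ j ∈ T, Φ.transpose.mulVec A j = Φ.transpose.mulVec e j := by
      intro j hj
      have hub : u - Φ.mulVec b = e - A := by
        funext i
        simp [hu, hA, hv, Matrix.mulVec_sub, Pi.sub_apply]
        ring
      have := hnormal j hj
      rw [hub, Matrix.mulVec_sub] at this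
      have : Φ.transpose.mulVec e j - Φ.transpose.mulVec A j = 0 := this
      linarith
    have key : ∑ i, A i ^ 2 = ∑ i, A i * e i := by
      have h1 : ∑ i, A i ^ 2 = dotProduct A (Φ.mulVec v) := by
        simp [dotProduct, hA, sq]
      have h2 : dotProduct A (Φ.mulVec v)
          = dotProduct (Φ.transpose.mulVec A) v := by
        rw [Matrix.dotProduct_mulVec, ← Matrix.mulVec_transpose]
      have h3 : dotProduct (Φ.transpose.mulVec A) v
          = dotProduct (Φ.transpose.mulVec e) v := by
        unfold dotProduct
        refine Finset.sum_congr rfl fun j _ => ?_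
        by_cases hjT : j ∈ T
        · rw [hAe j hjT]
        · rw [hvsupp j hjT]; ring
      have h4 : dotProduct (Φ.transpose.mulVec e) v = ∑ i, A i * e i := by
        rw [Matrix.mulVec_transpose, ← Matrix.dotProduct_mulVec]
        simp [dotProduct, hA, mul_comm]
      rw [h1, h2, h3, h4]
    have hcs : ∑ i, A i * e i ≤ l2 A * l2 e :=
      Real.sum_mul_le_sqrt_mul_sqrt _ _ _
    have hup2 : (l2 A) ^ 2 ≤ l2 A * l2 e := by
      rw [hA2, key]; exact hcs
    have hAle : l2 A ≤ l2 e := by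
      rcases hA0.eq_or_lt with h0 | h0
      · rw [← h0]; exact he0
      · nlinarith [hup2]
    have hlow : (1 - δ) * (l2 v) ^ 2 ≤ (l2 A) ^ 2 := (h v hsv).1
    have hmain : (1 - δ) * (l2 v) ^ 2 ≤ (l2 e) ^ 2 := by
      nlinarith [hup2, hAle, he0, hA0]
    have hsq : ((1 - δ) * l2 v) ^ 2 ≤ (l2 e) ^ 2 := by
      have hv0 : 0 ≤ l2 v := Real.sqrt_nonneg _
      nlinarith [hmain, sq_nonneg (l2 v)]
    have hfin : (1 - δ) * l2 v ≤ l2 e := by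
      have hv0 : (0:ℝ) ≤ l2 v := Real.sqrt_nonneg _
      have := Real.sqrt_le_sqrt hsq
      rwa [Real.sqrt_sq (mul_nonneg h1δ.le hv0), Real.sqrt_sq he0] at this
    rw [le_div_iff₀ h1δ]
    linarith [hfin]
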